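/- For 1 ≤ j ≤ k and reals q_j,…,q_k > 1, the kernel Q̄_{[j,k]}(x,y) defined as (Q_j ∘ ⋯ ∘ Q_k)(x,y) for x > y and as (-1)^{k-j}(Q^†_j ∘ ⋯ ∘ Q^†_k)(x,y) for x ≤ y satisfies Q_j^{-1} ∘ Q̄_{[j,k]} = Q̄_{[j+1,k]} whenever j < k, and Q_k^{-1} ∘ Q̄_{[k,k]} = 0, where Q̄_{[k,k]}(x,y) = q_k^{y-x} for all x,y. -/

import Mathlib

open scoped BigOperators

/-- Composition of kernels on `ℤ`. -/
noncomputable def kComp (A B : ℤ → ℤ → ℝ) : ℤ → ℤ → ℝ :=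
  fun x z => ∑' y : ℤ, A x y * B y z

/-- Iterated composition of a list of kernels (identity kernel for the empty list). -/
noncomputable def kCompList (L : List (ℤ → ℤ → ℝ)) : ℤ → ℤ → ℝ :=
  L.foldr kComp (fun x z => if x = z then 1 else 0)

/-- The strictly-left geometric kernel `Q_j(x,y) = q_j^{y-x} 1_{y<x}`. -/
noncomputable def Qker (q : ℕ → ℝ) (j : ℕ) : ℤ → ℤ → ℝ :=
  fun x y => if y < x then q j ^ (y - x) else 0

/-- The weakly-right geometric kernel `Q^†_j(x,y) = q_j^{y-x} 1_{y≥x}`. -/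
noncomputable def Qdag (q : ℕ → ℝ) (j : ℕ) : ℤ → ℤ → ℝ :=
  fun x y => if x ≤ y then q j ^ (y - x) else 0

/-- The inverse kernel `Q_j^{-1}(x,y) = -1_{y=x} + q_j 1_{y=x+1}`. -/
noncomputable def QinvK (q : ℕ → ℝ) (j : ℕ) : ℤ → ℤ → ℝ :=
  fun x y => (if y = x then (-1 : ℝ) else 0) + (if y = x + 1 then q j else 0)

/-- `Q_{[a,b]} = Q_a ∘ ⋯ ∘ Q_b`. -/
noncomputable def QcompIcc (q : ℕ → ℝ) (a b : ℕ) : ℤ → ℤ → ℝ :=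
  kCompList (((List.range (b + 1 - a)).map fun s => Qker q (a + s)))

/-- `Q^†_{[a,b]} = Q^†_a ∘ ⋯ ∘ Q^†_b`. -/
noncomputable def QdagCompIcc (q : ℕ → ℝ) (a b : ℕ) : ℤ → ℤ → ℝ :=
  kCompList (((List.range (b + 1 - a)).map fun s => Qdag q (a + s)))

/-- The piecewise kernel `Q̄_{[j,k]}`: equal to `Q_j∘⋯∘Q_k` for `x > y` and to
`(-1)^{k-j} Q^†_j∘⋯∘Q^†_k` for `x ≤ y`. -/
noncomputable def Qbar (q : ℕ → ℝ) (j k : ℕ) : ℤ → ℤ → ℝ :=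
  fun x y => if y < x then QcompIcc q j k x y
    else (-1 : ℝ) ^ (k - j) * QdagCompIcc q j k x y

lemma kCompList_cons (A : ℤ → ℤ → ℝ) (L : List (ℤ → ℤ → ℝ)) :
    kCompList (A :: L) = kComp A (kCompList L) := rfl

lemma kCompList_singleton (A : ℤ → ℤ → ℝ) (x z : ℤ) :
    kCompList [A] x z = A x z := by
  show kComp A (fun x z => if x = z then 1 else 0) x z = A x z
  unfold kComp
  have h : (fun y : ℤ => A x y * (if y = z then (1:ℝ) else 0))
      = fun y => if y = z then A x z else 0 := by
    funext y; by_cases h : y = z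
    · subst h; simp
    · simp [h]
  rw [h]
  exact tsum_ite_eq z (fun _ => A x z)

lemma range_map_succ (f : ℕ → ℤ → ℤ → ℝ) (n a : ℕ) :
    (List.range (n+1)).map (fun s => f (a+s))
      = f a :: (List.range n).map (fun s => f (a+1+s)) := by
  rw [List.range_succ_eq_map, List.map_cons, List.map_map]
  congr 1
  refine List.map_congr_left fun s _ => ?_
  show f (a + (s+1)) = f (a+1+s)
  have e : a + (s+1) = a+1+s := by omega
  rw [e]

lemma summable_of_Icc (f : ℤ → ℝ) (a b : ℤ) (h : ∀ w, f w ≠ 0 → a ≤ w ∧ w ≤ b) :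
    Summable f := by
  apply summable_of_ne_finset_zero (s := Finset.Icc a b)
  intro w hw
  by_contra hne
  exact hw (Finset.mem_Icc.mpr (h w hne))

lemma qinv_Qker (q : ℕ → ℝ) (j : ℕ) (hq : 1 < q j) (x w : ℤ) :
    q j * Qker q j (x+1) w - Qker q j x w = if w = x then 1 else 0 := by
  have h0 : q j ≠ 0 := ne_of_gt (lt_trans one_pos hq)
  unfold Qker
  by_cases h1 : w = x
  · subst h1
    rw [if_pos (by omega : w < w + 1), if_neg (lt_irrefl w), if_pos rfl]
    have e : w - (w+1) = (-1 : ℤ) := by ring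
    rw [e, zpow_neg_one, mul_inv_cancel₀ h0, sub_zero]
  · rw [if_neg h1]
    by_cases h2 : w < x
    · rw [if_pos (by omega : w < x + 1), if_pos h2]
      have e : w - (x+1) = (w - x) + (-1) := by ring
      rw [e, zpow_add₀ h0, zpow_neg_one]
      field_simp
      ring
    · rw [if_neg (by omega : ¬ w < x + 1), if_neg h2]; ring

lemma qinv_Qdag (q : ℕ → ℝ) (j : ℕ) (hq : 1 < q j) (x w : ℤ) :
    q j * Qdag q j (x+1) w - Qdag q j x w = if w = x then -1 else 0 := by
  have h0 : q j ≠ 0 := ne_of_gt (lt_trans one_pos hq)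
  unfold Qdag
  by_cases h1 : w = x
  · subst h1
    rw [if_neg (by omega : ¬ w + 1 ≤ w), if_pos le_rfl, if_pos rfl]
    have e : w - w = (0 : ℤ) := by ring
    rw [e, zpow_zero, mul_zero, zero_sub]
  · by_cases h2 : x + 1 ≤ w
    · rw [if_pos h2, if_pos (by omega : x ≤ w), if_neg h1]
      have e : w - (x+1) = (w - x) + (-1) := by ring
      rw [e, zpow_add₀ h0, zpow_neg_one]
      field_simp
      ring
    · rw [if_neg h2, if_neg (by omega : ¬ x ≤ w), if_neg h1]; ring

lemma kComp_Qinv (q : ℕ → ℝ) (j : ℕ) (A : ℤ → ℤ → ℝ) (x z : ℤ) :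
    kComp (QinvK q j) A x z = -(A x z) + q j * A (x+1) z := by
  unfold kComp QinvK
  rw [tsum_eq_sum (s := {x, x+1}) ?h]
  · rw [Finset.sum_pair (by omega : x ≠ x + 1)]
    rw [if_pos rfl, if_neg (by omega : ¬ x = x + 1), if_neg (by omega : ¬ x + 1 = x), if_pos rfl]
    ring
  · intro b hb
    simp only [Finset.mem_insert, Finset.mem_singleton] at hb
    push_neg at hb
    rw [if_neg hb.1, if_neg hb.2]
    ring

lemma Qker_vanish (q : ℕ → ℝ) (n : ℕ) :
    ∀ (a : ℕ) (x z : ℤ), x < z + (n+1 : ℤ) →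
      kCompList ((List.range (n+1)).map fun s => Qker q (a+s)) x z = 0 := by
  induction n with
  | zero =>
    intro a x z h
    rw [range_map_succ]
    simp only [List.range_zero, List.map_nil]
    rw [kCompList_singleton]
    unfold Qker
    rw [if_neg (by push_cast at h; omega)]
  | succ n ih =>
    intro a x z h
    rw [range_map_succ, kCompList_cons]
    unfold kComp
    have hz : ∀ w : ℤ, Qker q a x w *
        kCompList ((List.range (n+1)).map fun s => Qker q (a+1+s)) w z = 0 := by
      intro w
      by_cases hw : w < x
      · rw [ih (a+1) w z (by push_cast at h ⊢; omega), mul_zero]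
      · unfold Qker; rw [if_neg hw, zero_mul]
    exact (tsum_congr hz).trans tsum_zero

lemma Qdag_vanish (q : ℕ → ℝ) (n : ℕ) :
    ∀ (a : ℕ) (x z : ℤ), z < x →
      kCompList ((List.range (n+1)).map fun s => Qdag q (a+s)) x z = 0 := by
  induction n with
  | zero =>
    intro a x z h
    rw [range_map_succ]
    simp only [List.range_zero, List.map_nil]
    rw [kCompList_singleton]
    unfold Qdag
    rw [if_neg (by omega)]
  | succ n ih =>
    intro a x z h
    rw [range_map_succ, kCompList_cons]
    unfold kComp
    have hz : ∀ w : ℤ, Qdag q a x w *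
        kCompList ((List.range (n+1)).map fun s => Qdag q (a+1+s)) w z = 0 := by
      intro w
      by_cases hw : x ≤ w
      · rw [ih (a+1) w z (by omega), mul_zero]
      · unfold Qdag; rw [if_neg hw, zero_mul]
    exact (tsum_congr hz).trans tsum_zero

lemma tsum_shift (coef coef' F : ℤ → ℝ) (v : ℝ) (x : ℤ)
    (hpt : ∀ w, coef' w - coef w = if w = x then v else 0)
    (h1 : Summable (fun w => coef w * F w))
    (h2 : Summable (fun w => coef' w * F w)) :
    (∑' w, coef' w * F w) - (∑' w, coef w * F w) = v * F x := by
  rw [← Summable.tsum_sub h2 h1]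
  have h : (fun w => coef' w * F w - coef w * F w)
      = fun w => if w = x then v * F x else 0 := by
    funext w
    rw [← sub_mul, hpt w]
    by_cases hw : w = x
    · subst hw; rw [if_pos rfl, if_pos rfl]
    · rw [if_neg hw, if_neg hw, zero_mul]
  rw [h]
  exact tsum_ite_eq x (fun _ => v * F x)

/-- for `1 ≤ j ≤ k` and `q_j,…,q_k > 1`,
`Q_j^{-1} ∘ Q̄_{[j,k]} = Q̄_{[j+1,k]}` when `j < k`, while
`Q̄_{[k,k]}(x,y) = q_k^{y-x}` and `Q_k^{-1} ∘ Q̄_{[k,k]} = 0`. -/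
theorem stmt13 (q : ℕ → ℝ) (hq : ∀ i, 1 < q i) (j k : ℕ) (hjk : j ≤ k) :
    (j < k → ∀ x z : ℤ, kComp (QinvK q j) (Qbar q j k) x z = Qbar q (j + 1) k x z) ∧
    (∀ x y : ℤ, Qbar q k k x y = q k ^ (y - x)) ∧
    (∀ x z : ℤ, kComp (QinvK q k) (Qbar q k k) x z = 0) := by
  have h0 : ∀ i, q i ≠ 0 := fun i => ne_of_gt (lt_trans one_pos (hq i))
  have part2 : ∀ x y : ℤ, Qbar q k k x y = q k ^ (y - x) := by
    intro x y
    unfold Qbar QcompIcc QdagCompIcc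
    have hr : k + 1 - k = 1 := by omega
    rw [hr, range_map_succ (Qker q) 0 k, range_map_succ (Qdag q) 0 k]
    simp only [List.range_zero, List.map_nil]
    by_cases hxy : y < x
    · rw [if_pos hxy, kCompList_singleton]
      unfold Qker; rw [if_pos hxy]
    · rw [if_neg hxy, Nat.sub_self, pow_zero, one_mul, kCompList_singleton]
      unfold Qdag; rw [if_pos (by omega)]
  have part3 : ∀ x z : ℤ, kComp (QinvK q k) (Qbar q k k) x z = 0 := by
    intro x z
    rw [kComp_Qinv, part2, part2]
    have e : z - (x+1) = (z - x) + (-1) := by ring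
    rw [e, zpow_add₀ (h0 k), zpow_neg_one, mul_comm (q k ^ (z - x)) (q k)⁻¹,
      ← mul_assoc, mul_inv_cancel₀ (h0 k), one_mul, neg_add_cancel]
  refine ⟨?_, part2, part3⟩
  intro hjk' x z
  have hn : k + 1 - j = (k - j - 1) + 1 + 1 := by omega
  have hn' : k + 1 - (j+1) = (k - j - 1) + 1 := by omega
  set n := k - j - 1 with hndef
  have hsplit : QcompIcc q j k = kComp (Qker q j) (QcompIcc q (j+1) k) := by
    unfold QcompIcc
    rw [hn, hn', range_map_succ (Qker q) (n+1) j, kCompList_cons]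
  have hdsplit : QdagCompIcc q j k = kComp (Qdag q j) (QdagCompIcc q (j+1) k) := by
    unfold QdagCompIcc
    rw [hn, hn', range_map_succ (Qdag q) (n+1) j, kCompList_cons]
  have hvan : ∀ w z' : ℤ, w < z' + (n+1 : ℤ) → QcompIcc q (j+1) k w z' = 0 := by
    intro w z' h
    unfold QcompIcc; rw [hn']
    exact Qker_vanish q n (j+1) w z' h
  have hdvan : ∀ w z' : ℤ, z' < w → QdagCompIcc q (j+1) k w z' = 0 := by
    intro w z' h
    unfold QdagCompIcc; rw [hn']
    exact Qdag_vanish q n (j+1) w z' h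
  rw [kComp_Qinv]
  by_cases hzx : z < x
  · -- strict case: x > z
    have e1 : Qbar q j k x z = kComp (Qker q j) (QcompIcc q (j+1) k) x z := by
      simp only [Qbar]; rw [if_pos hzx, hsplit]
    have e2 : Qbar q j k (x+1) z = kComp (Qker q j) (QcompIcc q (j+1) k) (x+1) z := by
      simp only [Qbar]; rw [if_pos (show z < x+1 by omega), hsplit]
    have e3 : Qbar q (j+1) k x z = QcompIcc q (j+1) k x z := by
      simp only [Qbar]; rw [if_pos hzx]
    rw [e1, e2, e3]
    unfold kComp
    rw [← tsum_mul_left]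
    simp only [← mul_assoc]
    have hs1 : Summable (fun w => Qker q j x w * QcompIcc q (j+1) k w z) := by
      apply summable_of_Icc _ (z+1) x
      intro w hw
      constructor
      · by_contra hlt
        exact hw (by rw [hvan w z (by omega), mul_zero])
      · by_contra hlt
        exact hw (by unfold Qker; rw [if_neg (by omega), zero_mul])
    have hs2 : Summable (fun w => q j * Qker q j (x+1) w * QcompIcc q (j+1) k w z) := by
      apply summable_of_Icc _ (z+1) x
      intro w hw
      constructor
      · by_contra hlt
        exact hw (by rw [hvan w z (by omega), mul_zero])
      · by_contra hlt
        exact hw (by unfold Qker; rw [if_neg (by omega : ¬ w < x + 1), mul_zero, zero_mul])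
    have key := tsum_shift (fun w => Qker q j x w) (fun w => q j * Qker q j (x+1) w)
      (fun w => QcompIcc q (j+1) k w z) 1 x (fun w => qinv_Qker q j (hq j) x w) hs1 hs2
    simp only [one_mul] at key
    linarith [key]
  · -- weak case: x ≤ z
    have hxz : x ≤ z := not_lt.mp hzx
    have e1 : Qbar q j k x z
        = (-1:ℝ)^(k-j) * kComp (Qdag q j) (QdagCompIcc q (j+1) k) x z := by
      simp only [Qbar]; rw [if_neg hzx, hdsplit]
    have e2 : Qbar q j k (x+1) z
        = (-1:ℝ)^(k-j) * kComp (Qdag q j) (QdagCompIcc q (j+1) k) (x+1) z := by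
      by_cases hz1 : z < x + 1
      · simp only [Qbar]; rw [if_pos hz1]
        have hL : QcompIcc q j k (x+1) z = 0 := by
          unfold QcompIcc; rw [hn]
          exact Qker_vanish q (n+1) j (x+1) z (by push_cast; omega)
        have hR : QdagCompIcc q j k (x+1) z = 0 := by
          unfold QdagCompIcc; rw [hn]
          exact Qdag_vanish q (n+1) j (x+1) z (by omega)
        rw [hL, ← hdsplit, hR, mul_zero]
      · simp only [Qbar]; rw [if_neg hz1, hdsplit]
    have e3 : Qbar q (j+1) k x z = (-1:ℝ)^(k-(j+1)) * QdagCompIcc q (j+1) k x z := by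
      simp only [Qbar]; rw [if_neg hzx]
    rw [e1, e2, e3]
    have hsign : ((-1:ℝ))^(k-j) = -(-1:ℝ)^(k-(j+1)) := by
      have he : k - j = (k - (j+1)) + 1 := by omega
      rw [he, pow_succ]; ring
    have inner : q j * kComp (Qdag q j) (QdagCompIcc q (j+1) k) (x+1) z
        - kComp (Qdag q j) (QdagCompIcc q (j+1) k) x z
        = -(QdagCompIcc q (j+1) k x z) := by
      unfold kComp
      rw [← tsum_mul_left]
      simp only [← mul_assoc]
      have hs1 : Summable (fun w => Qdag q j x w * QdagCompIcc q (j+1) k w z) := by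
        apply summable_of_Icc _ x z
        intro w hw
        constructor
        · by_contra hlt
          exact hw (by unfold Qdag; rw [if_neg (by omega), zero_mul])
        · by_contra hlt
          exact hw (by rw [hdvan w z (by omega), mul_zero])
      have hs2 : Summable (fun w => q j * Qdag q j (x+1) w * QdagCompIcc q (j+1) k w z) := by
        apply summable_of_Icc _ x z
        intro w hw
        constructor
        · by_contra hlt
          exact hw (by unfold Qdag; rw [if_neg (by omega : ¬ x + 1 ≤ w), mul_zero, zero_mul])
        · by_contra hlt
          exact hw (by rw [hdvan w z (by omega), mul_zero])
      have key := tsum_shift (fun w => Qdag q j x w) (fun w => q j * Qdag q j (x+1) w)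
        (fun w => QdagCompIcc q (j+1) k w z) (-1) x (fun w => qinv_Qdag q j (hq j) x w) hs1 hs2
      simp only [neg_one_mul] at key
      linarith [key]
    linear_combination ((-1:ℝ)^(k-j)) * inner - (QdagCompIcc q (j+1) k x z) * hsign
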